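/- Let w = (0, 1/(βd), 2/(βd), ..., (d-1)/(βd)) ∈ R^d with β = (d-1)/2, and let P^w = conv({π·w : π ∈ S_d}) be the permutahedron on the orbit of w under coordinate permutations. Fix the identity permutation vertex w itself (sorted increasingly) and α with 0 < α < 1/d. Then every point of the scaled polytope conv({(1-α)w + α(π·w) : π ∈ S_d}) has strictly increasing coordinates: for every π ∈ S_d and every i ∈ {1,...,d-1}, ((1-α)w + α(π·w))_i < ((1-α)w + α(π·w))_{i+1}. -/

import Mathlib

/-- Scaled copies of the permutahedron anchored at the sorted vertex w, with scaling α < 1/d,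
lie strictly inside the open ordering cone: all their points have strictly increasing
coordinates. -/
theorem permutahedron_scaled_copy_in_cone (d : ℕ) (hd : 2 ≤ d)
    (w : Fin d → ℝ) (hw : ∀ i : Fin d, w i = (i : ℝ) / ((((d:ℝ) - 1)/2) * d))
    (α : ℝ) (hα : 0 < α ∧ α < 1/(d:ℝ)) :
    (∀ u ∈ convexHull ℝ {x : Fin d → ℝ |
        ∃ π : Equiv.Perm (Fin d), ∀ t, x t = (1 - α) * w t + α * w (π.symm t)},
      ∀ i j : Fin d, (i : ℕ) + 1 = (j : ℕ) → u i < u j) ∧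
    ∀ π : Equiv.Perm (Fin d), ∀ i j : Fin d, (i : ℕ) + 1 = (j : ℕ) →
      (1 - α) * w i + α * w (π.symm i) < (1 - α) * w j + α * w (π.symm j) := by
  obtain ⟨hα0, hαd⟩ := hα
  have hdR : (2:ℝ) ≤ (d:ℝ) := by exact_mod_cast hd
  have hd0 : (0:ℝ) < (d:ℝ) := by linarith
  have hc : (0:ℝ) < (((d:ℝ) - 1)/2) * d := by nlinarith
  have hαd' : α * (d:ℝ) < 1 := by
    have := (lt_div_iff₀ hd0).mp hαd
    linarith
  have key : ∀ π : Equiv.Perm (Fin d), ∀ i j : Fin d, (i : ℕ) + 1 = (j : ℕ) →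
      (1 - α) * w i + α * w (π.symm i) < (1 - α) * w j + α * w (π.symm j) := by
    intro π i j hij
    rw [hw i, hw j, hw (π.symm i), hw (π.symm j)]
    have hji : (j : ℝ) = (i : ℝ) + 1 := by exact_mod_cast hij.symm
    have h1 : ((π.symm i : Fin d) : ℝ) ≤ (d:ℝ) - 1 := by
      have h := (π.symm i).isLt
      have h' : (((π.symm i : Fin d) : ℕ) : ℝ) < (d:ℝ) := by exact_mod_cast h
      have h'' : (((π.symm i : Fin d) : ℕ) : ℝ) + 1 ≤ (d:ℝ) := by
        exact_mod_cast Nat.succ_le_of_lt h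
      linarith
    have h2 : (0:ℝ) ≤ ((π.symm j : Fin d) : ℝ) := by positivity
    have key2 : (1 - α) * (i : ℝ) + α * ((π.symm i : Fin d) : ℝ) <
        (1 - α) * (j : ℝ) + α * ((π.symm j : Fin d) : ℝ) := by
      nlinarith [mul_le_mul_of_nonneg_left h1 hα0.le, mul_nonneg hα0.le h2]
    rw [mul_div_assoc', mul_div_assoc', mul_div_assoc', mul_div_assoc',
      ← add_div, ← add_div]
    gcongr
  refine ⟨?_, key⟩
  intro u hu i j hij
  have hlin : IsLinearMap ℝ (fun v : Fin d → ℝ => v i - v j) := by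
    constructor
    · intro x y; simp [Pi.add_apply]; ring
    · intro c x; simp [Pi.smul_apply, smul_eq_mul]; ring
  have hconv : Convex ℝ {v : Fin d → ℝ | v i - v j < 0} :=
    convex_halfSpace_lt hlin 0
  have hsub : {x : Fin d → ℝ |
      ∃ π : Equiv.Perm (Fin d), ∀ t, x t = (1 - α) * w t + α * w (π.symm t)} ⊆
      {v : Fin d → ℝ | v i - v j < 0} := by
    rintro x ⟨π, hx⟩
    have := key π i j hij
    simp only [Set.mem_setOf_eq, hx i, hx j]
    linarith
  have := convexHull_min hsub hconv hu
  simpa using sub_neg.mp this
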